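/- Let A be a valuation ring with fraction field K, let B be the integral closure of A in a finite field extension L of K, and let 𝔪 be a maximal ideal of B. Then the localization B_𝔪 is a valuation ring (with fraction field L). -/

import Mathlib

open Polynomial

/-- In a valuation ring, any finite nonempty family has a member dividing all others. -/
private lemma exists_dvd_all_aux {A : Type*} [CommRing A] [IsDomain A] [ValuationRing A]
    {ι : Type*} (s : Finset ι) (f : ι → A) (hs : s.Nonempty) :
    ∃ j ∈ s, ∀ i ∈ s, f j ∣ f i := by
  classical
  induction s using Finset.induction_on with
  | empty => exact absurd hs (by simp)
  | @insert a s ha ih =>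
    rcases s.eq_empty_or_nonempty with rfl | hne
    · exact ⟨a, Finset.mem_insert_self a _, by
        intro i hi
        rcases Finset.mem_insert.mp hi with rfl | h
        · exact dvd_rfl
        · simp at h⟩
    · obtain ⟨j, hj, hjd⟩ := ih hne
      rcases ValuationRing.cond (f a) (f j) with ⟨c, hc | hc⟩
      · refine ⟨a, Finset.mem_insert_self a _, fun i hi => ?_⟩
        rcases Finset.mem_insert.mp hi with rfl | h
        · exact dvd_rfl
        · exact dvd_trans ⟨c, hc.symm⟩ (hjd i h)
      · refine ⟨j, Finset.mem_insert_of_mem hj, fun i hi => ?_⟩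
        rcases Finset.mem_insert.mp hi with rfl | h
        · exact ⟨c, hc.symm⟩
        · exact hjd i h

/-- An element of `A[x] ∩ A[x⁻¹]` inside a field is integral over `A`. -/
private lemma isIntegral_of_mem_adjoin_both {A L : Type*} [CommRing A] [Field L] [Algebra A L]
    {x y : L} (hx : x ≠ 0)
    (h1 : y ∈ Algebra.adjoin A {x}) (h2 : y ∈ Algebra.adjoin A {x⁻¹}) :
    IsIntegral A y := by
  rw [Algebra.adjoin_singleton_eq_range_aeval] at h1 h2
  obtain ⟨P, hP⟩ := h1
  obtain ⟨Q, hQ⟩ := h2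
  set n : ℕ := max P.natDegree Q.natDegree with hn
  set N : Submodule A L := Submodule.span A ((fun k : ℤ => x ^ k) '' (Set.Icc (-(n:ℤ)) (n:ℤ)))
    with hNdef
  have hmem : ∀ k : ℤ, -(n:ℤ) ≤ k → k ≤ n → x ^ k ∈ N :=
    fun k hk1 hk2 => Submodule.subset_span ⟨k, ⟨hk1, hk2⟩, rfl⟩
  have hgen : ∀ k ∈ Set.Icc (-(n:ℤ)) (n:ℤ), y * x ^ k ∈ N := by
    rintro k ⟨hk1, hk2⟩
    rcases le_or_gt 0 k with hk | hk
    · have hQ' : Polynomial.aeval x⁻¹ Q = y := hQ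
      have hy' : y = ∑ i ∈ Finset.range (Q.natDegree + 1), Q.coeff i • x⁻¹ ^ i := by
        rw [← hQ', Polynomial.aeval_eq_sum_range]
      rw [hy', Finset.sum_mul]
      refine Submodule.sum_mem _ fun i hi => ?_
      have hiq : (i : ℤ) ≤ n := by
        have := Nat.lt_succ_iff.mp (Finset.mem_range.mp hi)
        exact_mod_cast le_trans this (le_max_right _ _)
      rw [smul_mul_assoc]
      have he : x⁻¹ ^ i * x ^ k = x ^ (k - (i : ℤ)) := by
        rw [inv_pow, ← zpow_natCast x i, ← zpow_neg, ← zpow_add₀ hx]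
        congr 1; ring
      rw [he]
      exact Submodule.smul_mem _ _ (hmem _ (by omega) (by omega))
    · have hP' : Polynomial.aeval x P = y := hP
      have hy' : y = ∑ i ∈ Finset.range (P.natDegree + 1), P.coeff i • x ^ i := by
        rw [← hP', Polynomial.aeval_eq_sum_range]
      rw [hy', Finset.sum_mul]
      refine Submodule.sum_mem _ fun i hi => ?_
      have hip : (i : ℤ) ≤ n := by
        have := Nat.lt_succ_iff.mp (Finset.mem_range.mp hi)
        exact_mod_cast le_trans this (le_max_left _ _)
      rw [smul_mul_assoc]
      have he : x ^ i * x ^ k = x ^ ((i : ℤ) + k) := by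
        rw [← zpow_natCast x i, ← zpow_add₀ hx]
      rw [he]
      exact Submodule.smul_mem _ _ (hmem _ (by omega) (by omega))
  have hbot : N ≠ ⊥ := by
    rw [Submodule.ne_bot_iff]
    refine ⟨1, ?_, one_ne_zero⟩
    simpa using hmem 0 (by simp) (by simp)
  have hfg : N.FG := Submodule.fg_span ((Set.finite_Icc _ _).image _)
  have hstab : ∀ m ∈ N, y • m ∈ N := by
    intro m hm
    induction hm using Submodule.span_induction with
    | mem m hm =>
      obtain ⟨k, hk, rfl⟩ := hm
      simpa [smul_eq_mul] using hgen k hk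
    | zero => simpa using N.zero_mem
    | add a b _ _ ha hb => rw [smul_add]; exact N.add_mem ha hb
    | smul a m _ hm => rw [smul_comm]; exact N.smul_mem a hm
  exact isIntegral_of_smul_mem_submodule N hbot hfg y hstab

/-- Bourbaki, Alg. Comm. VI §8.6 Prop 6: if `A` is a valuation ring with fraction
field `K`, `L/K` a finite field extension, `B` the integral closure of `A` in `L`,
and `𝔪` a maximal ideal of `B`, then the localization `B_𝔪` is a valuation ring. -/
theorem localization_integralClosure_at_maximal_isValuationRing
    (A K L : Type*) [CommRing A] [IsDomain A] [ValuationRing A]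
    [Field K] [Algebra A K] [IsFractionRing A K]
    [Field L] [Algebra K L] [FiniteDimensional K L]
    [Algebra A L] [IsScalarTower A K L]
    (𝔪 : Ideal (integralClosure A L)) [𝔪.IsMaximal] :
    ValuationRing (Localization.AtPrime 𝔪) := by
  classical
  have hα : Function.Injective (algebraMap A L) := by
    rw [IsScalarTower.algebraMap_eq A K L]
    exact (algebraMap K L).injective.comp (IsFractionRing.injective A K)
  -- KEY: every nonzero `y : L` or its inverse lies in `B_𝔪` (as a fraction over `B`).
  have key : ∀ y : L, y ≠ 0 →
      (∃ p q : integralClosure A L, q ∉ 𝔪 ∧ y * q = p) ∨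
      (∃ p q : integralClosure A L, q ∉ 𝔪 ∧ y⁻¹ * q = p) := by
    intro y hy
    by_contra hcon
    push_neg at hcon
    obtain ⟨h₁, h₂⟩ := hcon
    -- the minimal polynomial of `y` over `K`, with denominators cleared
    have hyint : IsIntegral K y := .of_finite K y
    have hP0 : minpoly K y ≠ 0 := minpoly.ne_zero hyint
    obtain ⟨b, hbM, hbmap⟩ :=
      IsLocalization.integerNormalization_spec (nonZeroDivisors A) (minpoly K y)
    have hb : ∀ i, algebraMap A K
        ((IsLocalization.integerNormalization (nonZeroDivisors A) (minpoly K y)).coeff i)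
        = b • (minpoly K y).coeff i := fun i => by
      have := congrArg (fun p => Polynomial.coeff p i) hbmap
      simpa only [Polynomial.coeff_map, Polynomial.coeff_smul] using this
    set Q : Polynomial A := IsLocalization.integerNormalization (nonZeroDivisors A) (minpoly K y)
      with hQdef
    have hbK : algebraMap A K (b : A) ≠ 0 :=
      IsFractionRing.to_map_ne_zero_of_mem_nonZeroDivisors hbM
    have hQ0 : Q ≠ 0 := by
      intro h
      apply hP0
      ext i
      have hbi := hb i
      rw [h] at hbi
      simp only [Polynomial.coeff_zero, map_zero, Algebra.smul_def] at hbi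
      rcases mul_eq_zero.mp hbi.symm with h' | h'
      · exact absurd h' hbK
      · simpa using h'
    have haeQ : Polynomial.aeval y Q = 0 := by
      have h1 : Q.map (algebraMap A K) = Polynomial.C (algebraMap A K (b : A)) * minpoly K y := by
        ext i
        simp [Polynomial.coeff_map, hb i, Algebra.smul_def]
      rw [← Polynomial.aeval_map_algebraMap K y Q, h1, map_mul, Polynomial.aeval_C,
        minpoly.aeval, mul_zero]
    -- normalize coefficients: divide by a coefficient dividing all others
    obtain ⟨j₀, hj₀s, hj₀d⟩ := exists_dvd_all_aux Q.support (fun i => Q.coeff i)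
      (Polynomial.support_nonempty.mpr hQ0)
    have hd0 : Q.coeff j₀ ≠ 0 := Polynomial.mem_support_iff.mp hj₀s
    have hdvd : ∀ i, ∃ e, Q.coeff i = Q.coeff j₀ * e := by
      intro i
      by_cases hi : i ∈ Q.support
      · exact hj₀d i hi
      · exact ⟨0, by simpa using Polynomial.notMem_support_iff.mp hi⟩
    choose e he using hdvd
    set c : ℕ → A := fun i => if i = j₀ then 1 else e i with hcdef
    have hce : ∀ i, Q.coeff i = Q.coeff j₀ * c i := by
      intro i
      by_cases hi : i = j₀
      · subst hi; simp [hcdef]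
      · simp only [hcdef, if_neg hi]; exact he i
    set n := Q.natDegree with hndef
    have hj₀n : j₀ ≤ n := Polynomial.le_natDegree_of_mem_supp _ hj₀s
    set α : A →+* L := algebraMap A L with hαdef
    have hrel : ∑ i ∈ Finset.range (n + 1), α (c i) * y ^ i = 0 := by
      have h2 : ∑ i ∈ Finset.range (n + 1), α (Q.coeff i) * y ^ i = 0 := by
        rw [Polynomial.aeval_eq_sum_range] at haeQ
        simpa [Algebra.smul_def] using haeQ
      have hd0' : α (Q.coeff j₀) ≠ 0 := fun hh => hd0 (hα (by rw [hh, map_zero]))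
      have h3 : α (Q.coeff j₀) * (∑ i ∈ Finset.range (n + 1), α (c i) * y ^ i) = 0 := by
        rw [Finset.mul_sum]
        simp_rw [← mul_assoc, ← map_mul, ← hce]
        exact h2
      rcases mul_eq_zero.mp h3 with h | h
      · exact absurd h hd0'
      · exact h
    -- the partial "Horner" sums
    set z : ℕ → L := fun j => ∑ i ∈ Finset.Icc j n, α (c i) * y ^ (i - j) with hzdef
    have hz_adj : ∀ j, z j ∈ Algebra.adjoin A {y} := by
      intro j
      refine Subalgebra.sum_mem _ fun i _ => ?_
      exact Subalgebra.mul_mem _ (Subalgebra.algebraMap_mem _ _)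
        (Subalgebra.pow_mem _ (Algebra.self_mem_adjoin_singleton A y) _)
    have hzx : ∀ j ≤ n + 1, z j * y ^ j = -∑ i ∈ Finset.range j, α (c i) * y ^ i := by
      intro j hj
      have hsplit : (∑ i ∈ Finset.range j, α (c i) * y ^ i)
          + ∑ i ∈ Finset.Icc j n, α (c i) * y ^ i = 0 := by
        rw [Finset.range_eq_Ico, ← Finset.Ico_add_one_right_eq_Icc,
          Finset.sum_Ico_consecutive _ (Nat.zero_le j) hj, ← Finset.range_eq_Ico]
        exact hrel
      have hmul : z j * y ^ j = ∑ i ∈ Finset.Icc j n, α (c i) * y ^ i := by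
        rw [hzdef]
        rw [Finset.sum_mul]
        refine Finset.sum_congr rfl fun i hi => ?_
        have hji : j ≤ i := (Finset.mem_Icc.mp hi).1
        rw [mul_assoc, ← pow_add, Nat.sub_add_cancel hji]
      rw [hmul]
      linear_combination hsplit
    have hyinv : ∀ m : ℕ, y ^ m * y⁻¹ ^ m = 1 := fun m => by
      rw [← mul_pow, mul_inv_cancel₀ hy, one_pow]
    have hz_inv : ∀ j, j ≤ n + 1 →
        z j ∈ Algebra.adjoin A {y⁻¹} ∧ z j * y ∈ Algebra.adjoin A {y⁻¹} := by
      intro j hj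
      have hzj : z j = (-∑ i ∈ Finset.range j, α (c i) * y ^ i) * y⁻¹ ^ j := by
        rw [← hzx j hj, mul_assoc, hyinv, mul_one]
      have hterm : ∀ i < j, y ^ i * y⁻¹ ^ j = y⁻¹ ^ (j - i) := by
        intro i hij
        have h1 : y⁻¹ ^ j = y⁻¹ ^ (j - i) * y⁻¹ ^ i := by
          rw [← pow_add, Nat.sub_add_cancel hij.le]
        rw [h1, mul_left_comm]
        rw [← mul_pow, mul_inv_cancel₀ hy, one_pow, mul_one]
      have hzj' : z j = -∑ i ∈ Finset.range j, α (c i) * y⁻¹ ^ (j - i) := by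
        rw [hzj, neg_mul, Finset.sum_mul]
        congr 1
        refine Finset.sum_congr rfl fun i hi => ?_
        rw [mul_assoc, hterm i (Finset.mem_range.mp hi)]
      constructor
      · rw [hzj']
        exact Subalgebra.neg_mem _ (Subalgebra.sum_mem _ fun i _ =>
          Subalgebra.mul_mem _ (Subalgebra.algebraMap_mem _ _)
            (Subalgebra.pow_mem _ (Algebra.self_mem_adjoin_singleton A y⁻¹) _))
      · have hterm2 : ∀ i < j, y⁻¹ ^ (j - i) * y = y⁻¹ ^ (j - i - 1) := by
          intro i hij
          have h1 : j - i = (j - i - 1) + 1 := by omega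
          rw [h1, pow_succ, mul_assoc, inv_mul_cancel₀ hy, mul_one, Nat.add_sub_cancel]
        rw [hzj', neg_mul, Finset.sum_mul]
        refine Subalgebra.neg_mem _ (Subalgebra.sum_mem _ fun i hi => ?_)
        rw [mul_assoc, hterm2 i (Finset.mem_range.mp hi)]
        exact Subalgebra.mul_mem _ (Subalgebra.algebraMap_mem _ _)
          (Subalgebra.pow_mem _ (Algebra.self_mem_adjoin_singleton A y⁻¹) _)
    have hzB : ∀ j, j ≤ n + 1 →
        z j ∈ integralClosure A L ∧ z j * y ∈ integralClosure A L := by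
      intro j hj
      obtain ⟨m1, m2⟩ := hz_inv j hj
      exact ⟨isIntegral_of_mem_adjoin_both hy (hz_adj j) m1,
        isIntegral_of_mem_adjoin_both hy
          (Subalgebra.mul_mem _ (hz_adj j) (Algebra.self_mem_adjoin_singleton A y)) m2⟩
    -- all these elements must lie in 𝔪, else we contradict `h₁`/`h₂`
    have hzmem : ∀ j, ∀ hj : j ≤ n + 1,
        (⟨z j, (hzB j hj).1⟩ : integralClosure A L) ∈ 𝔪 := by
      intro j hj
      by_contra hnot
      exact h₁ ⟨z j * y, (hzB j hj).2⟩ ⟨z j, (hzB j hj).1⟩ hnot (mul_comm y (z j))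
    have hzymem : ∀ j, ∀ hj : j ≤ n + 1,
        (⟨z j * y, (hzB j hj).2⟩ : integralClosure A L) ∈ 𝔪 := by
      intro j hj
      by_contra hnot
      refine h₂ ⟨z j, (hzB j hj).1⟩ ⟨z j * y, (hzB j hj).2⟩ hnot ?_
      show y⁻¹ * (z j * y) = z j
      rw [mul_comm (z j) y, ← mul_assoc, inv_mul_cancel₀ hy, one_mul]
    -- recurrence extracting the coefficients
    have hrec : ∀ j ≤ n, z j = α (c j) + z (j + 1) * y := by
      intro j hj
      have hins : Finset.Icc j n = insert j (Finset.Icc (j + 1) n) := by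
        ext i
        simp only [Finset.mem_Icc, Finset.mem_insert]
        omega
      have hnotmem : j ∉ Finset.Icc (j + 1) n := by simp
      simp only [hzdef]
      rw [hins, Finset.sum_insert hnotmem, Nat.sub_self, pow_zero, mul_one]
      congr 1
      rw [Finset.sum_mul]
      refine Finset.sum_congr rfl fun i hi => ?_
      have h1 : j + 1 ≤ i := (Finset.mem_Icc.mp hi).1
      have h2 : i - j = (i - (j + 1)) + 1 := by omega
      rw [mul_assoc, ← pow_succ, ← h2]
    -- every coefficient lies in the contraction of 𝔪: contradiction with c j₀ = 1
    have hcj : ∀ j ≤ n, algebraMap A (integralClosure A L) (c j) ∈ 𝔪 := by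
      intro j hj
      have hval : α (c j) = z j - z (j + 1) * y := by
        have h := hrec j hj
        linear_combination -h
      have heq : algebraMap A (integralClosure A L) (c j) =
          (⟨z j, (hzB j (by omega)).1⟩ : integralClosure A L)
            - ⟨z (j + 1) * y, (hzB (j + 1) (by omega)).2⟩ := by
        apply Subtype.ext
        show α (c j) = _
        rw [hval]
        rfl
      rw [heq]
      exact Ideal.sub_mem _ (hzmem j (by omega)) (hzymem (j + 1) (by omega))
    have h1m : (1 : integralClosure A L) ∈ 𝔪 := by
      have h := hcj j₀ hj₀n
      simp only [hcdef, if_pos rfl, map_one] at h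
      exact h
    exact Ideal.IsMaximal.ne_top ‹𝔪.IsMaximal› ((Ideal.eq_top_iff_one 𝔪).mpr h1m)
  -- Conclude the valuation ring property of the localization from `key`.
  refine { cond' := ?_ }
  intro a b
  rcases eq_or_ne a 0 with rfl | ha
  · exact ⟨0, Or.inr (mul_zero b)⟩
  rcases eq_or_ne b 0 with rfl | hb
  · exact ⟨0, Or.inl (mul_zero a)⟩
  obtain ⟨⟨a1, a2⟩, ha'⟩ := IsLocalization.mk'_surjective 𝔪.primeCompl a
  dsimp only at ha'
  subst ha'
  obtain ⟨⟨b1, b2⟩, hb'⟩ := IsLocalization.mk'_surjective 𝔪.primeCompl b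
  dsimp only at hb'
  subst hb'
  have ha1 : a1 ≠ 0 := fun h => ha (by rw [h, IsLocalization.mk'_zero])
  have hb1 : b1 ≠ 0 := fun h => hb (by rw [h, IsLocalization.mk'_zero])
  have hL : ∀ w : integralClosure A L, w ≠ 0 → (w : L) ≠ 0 := fun w hw h =>
    hw (Subtype.ext (by simpa using h))
  have ha2 : (((a2 : integralClosure A L)) : L) ≠ 0 :=
    hL _ (fun h => a2.2 (by rw [h]; exact 𝔪.zero_mem))
  have hb2 : (((b2 : integralClosure A L)) : L) ≠ 0 :=
    hL _ (fun h => b2.2 (by rw [h]; exact 𝔪.zero_mem))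
  have ha1' : (a1 : L) ≠ 0 := hL _ ha1
  have hb1' : (b1 : L) ≠ 0 := hL _ hb1
  set y : L := ((b1 : L) * ((a2 : integralClosure A L) : L))
      / ((a1 : L) * ((b2 : integralClosure A L) : L)) with hydef
  have hy0 : y ≠ 0 := div_ne_zero (mul_ne_zero hb1' ha2) (mul_ne_zero ha1' hb2)
  rcases key y hy0 with ⟨p, q, hq, hpq⟩ | ⟨p, q, hq, hpq⟩
  · refine ⟨IsLocalization.mk' (Localization.AtPrime 𝔪) p (⟨q, hq⟩ : 𝔪.primeCompl), Or.inl ?_⟩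
    rw [← IsLocalization.mk'_mul, IsLocalization.mk'_eq_iff_eq]
    congr 1
    apply Subtype.ext
    have hden : ((a1 : L) * ((b2 : integralClosure A L) : L)) ≠ 0 := mul_ne_zero ha1' hb2
    have hpq' : (b1 : L) * ((a2 : integralClosure A L) : L) * (q : L)
        = (p : L) * ((a1 : L) * ((b2 : integralClosure A L) : L)) := by
      rw [hydef, div_mul_eq_mul_div, div_eq_iff hden] at hpq
      exact hpq
    push_cast
    linear_combination -hpq'
  · refine ⟨IsLocalization.mk' (Localization.AtPrime 𝔪) p (⟨q, hq⟩ : 𝔪.primeCompl), Or.inr ?_⟩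
    rw [← IsLocalization.mk'_mul, IsLocalization.mk'_eq_iff_eq]
    congr 1
    apply Subtype.ext
    have hnum : ((b1 : L) * ((a2 : integralClosure A L) : L)) ≠ 0 := mul_ne_zero hb1' ha2
    have hpq' : (a1 : L) * ((b2 : integralClosure A L) : L) * (q : L)
        = (p : L) * ((b1 : L) * ((a2 : integralClosure A L) : L)) := by
      rw [hydef, inv_div, div_mul_eq_mul_div, div_eq_iff hnum] at hpq
      exact hpq
    push_cast
    linear_combination -hpq'
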